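/- arXiv:1511.02574 — 2 statements merged into one kernel-verified Lean document; each statement's English description precedes it below -/
import Mathlib

section
/- Let $X \sim B(n,p)$ be a binomial random variable and let $k$ be an integer with $np < k < n$. Then $\mathbb{P}(X \ge k) \le \exp\left(-n\, D\left(\tfrac{k}{n} \,\Big\|\, p\right)\right)$, where $D(a\|b) = a \ln\frac{a}{b} + (1-a)\ln\frac{1-a}{1-b}$ is the binary relative entropy (natural log). -/
open Finset

/-- Binary relative entropy (with natural logarithm). -/
noncomputable def relEntropy (a b : ℝ) : ℝ :=
  a * Real.log (a / b) + (1 - a) * Real.log ((1 - a) / (1 - b))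

/-- Chernoff–Hoeffding upper-tail bound for the binomial distribution `B(n,p)`:
`P(X ≥ k) ≤ exp(-n D(k/n ‖ p))` whenever `np < k < n`. -/
theorem binomial_upper_tail_chernoff (n k : ℕ) (p : ℝ) (hp₀ : 0 < p) (hp₁ : p < 1)
    (hk₁ : (n : ℝ) * p < k) (hk₂ : k < n) :
    ∑ i ∈ Finset.Icc k n, (n.choose i : ℝ) * p ^ i * (1 - p) ^ (n - i) ≤
      Real.exp (-(n : ℝ) * relEntropy ((k : ℝ) / n) p) := by
  have hn : 0 < (n : ℝ) := by
    have : 0 < n := lt_of_le_of_lt (Nat.zero_le k) hk₂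
    exact_mod_cast this
  set a : ℝ := (k : ℝ) / n with ha_def
  have hpa : p < a := by rw [lt_div_iff₀ hn]; linarith
  have ha1 : a < 1 := by rw [div_lt_one hn]; exact_mod_cast hk₂
  have ha0 : 0 < a := hp₀.trans hpa
  have h1p : 0 < 1 - p := by linarith
  have h1a : 0 < 1 - a := by linarith
  set r : ℝ := a * (1 - p) / ((1 - a) * p) with hr_def
  have hr0 : 0 < r := by positivity
  have hr1 : 1 < r := by
    rw [hr_def, lt_div_iff₀ (by positivity)]
    nlinarith
  have hpr : p * r + (1 - p) = (1 - p) / (1 - a) := by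
    rw [hr_def]; field_simp; ring
  -- Step 1: tilted sum bound
  have step1 : (∑ i ∈ Finset.Icc k n, (n.choose i : ℝ) * p ^ i * (1 - p) ^ (n - i)) * r ^ k
      ≤ (p * r + (1 - p)) ^ n := by
    rw [add_pow, Finset.sum_mul]
    calc ∑ i ∈ Finset.Icc k n, (n.choose i : ℝ) * p ^ i * (1 - p) ^ (n - i) * r ^ k
        ≤ ∑ i ∈ Finset.Icc k n, (p * r) ^ i * (1 - p) ^ (n - i) * (n.choose i : ℝ) := by
          apply Finset.sum_le_sum
          intro i hi
          obtain ⟨hki, hin⟩ := Finset.mem_Icc.mp hi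
          have hrk : r ^ k ≤ r ^ i := pow_le_pow_right₀ hr1.le hki
          have h1 : (0:ℝ) ≤ (n.choose i : ℝ) * p ^ i * (1 - p) ^ (n - i) := by positivity
          calc (n.choose i : ℝ) * p ^ i * (1 - p) ^ (n - i) * r ^ k
              ≤ (n.choose i : ℝ) * p ^ i * (1 - p) ^ (n - i) * r ^ i :=
                mul_le_mul_of_nonneg_left hrk h1
            _ = (p * r) ^ i * (1 - p) ^ (n - i) * (n.choose i : ℝ) := by
                rw [mul_pow]; ring
      _ ≤ ∑ i ∈ Finset.range (n + 1), (p * r) ^ i * (1 - p) ^ (n - i) * (n.choose i : ℝ) := by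
          apply Finset.sum_le_sum_of_subset_of_nonneg
          · intro i hi
            obtain ⟨_, hin⟩ := Finset.mem_Icc.mp hi
            exact Finset.mem_range.mpr (Nat.lt_succ_of_le hin)
          · intro i _ _
            positivity
  have step2 : ∑ i ∈ Finset.Icc k n, (n.choose i : ℝ) * p ^ i * (1 - p) ^ (n - i)
      ≤ ((1 - p) / (1 - a)) ^ n / r ^ k := by
    rw [le_div_iff₀ (pow_pos hr0 k), ← hpr]
    exact step1
  -- Step 2: compute the exponential
  have hka : (n : ℝ) * a = k := by
    rw [ha_def]; field_simp
  have hna : (n : ℝ) * (1 - a) = (n : ℝ) - k := by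
    rw [ha_def]; field_simp
  have hexp : Real.exp (-(n : ℝ) * relEntropy a p)
      = (p / a) ^ k * ((1 - p) / (1 - a)) ^ (n - k) := by
    unfold relEntropy
    have h1 : -(n : ℝ) * (a * Real.log (a / p) + (1 - a) * Real.log ((1 - a) / (1 - p)))
        = (k : ℝ) * Real.log (p / a) + ((n - k : ℕ) : ℝ) * Real.log ((1 - p) / (1 - a)) := by
      rw [Real.log_div ha0.ne' hp₀.ne', Real.log_div h1a.ne' h1p.ne',
        Real.log_div hp₀.ne' ha0.ne', Real.log_div h1p.ne' h1a.ne']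
      push_cast [Nat.cast_sub hk₂.le]
      linear_combination (Real.log p - Real.log a) * hka +
        (Real.log (1 - p) - Real.log (1 - a)) * hna
    rw [h1, Real.exp_add, Real.exp_nat_mul, Real.exp_nat_mul,
      Real.exp_log (show (0:ℝ) < p / a by positivity),
      Real.exp_log (show (0:ℝ) < (1 - p) / (1 - a) by positivity)]
  rw [hexp]
  refine step2.trans (le_of_eq ?_)
  have hsplit : ((1 - p) / (1 - a)) ^ n
      = ((1 - p) / (1 - a)) ^ k * ((1 - p) / (1 - a)) ^ (n - k) := by
    rw [← pow_add, Nat.add_sub_cancel' hk₂.le]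
  have hdiv : (1 - p) / (1 - a) / r = p / a := by
    rw [hr_def]; field_simp
  rw [hsplit, mul_comm, mul_div_assoc, ← div_pow, hdiv, mul_comm]
end

section
/- Suppose in a unit-area network each of at least $c n$ source–destination pairs ($c > 0$ constant) requires multihop transmission over distance at least $d_n = n^{-(1-(\alpha-\beta))/2 - \epsilon'}$, each active hop with transmission radius $r$ exclusively occupies area at least $\pi r d_n$ per pair, and simultaneously active pairs have disjoint exclusive areas within the unit square. If additionally $r \ge c_7 \sqrt{\log n / n}$, then the symmetric per-node throughput satisfies $T_n \le \frac{W}{\pi c_7} n^{-(\alpha-\beta)/2} \cdot n^{\epsilon'} (\log n)^{-1/2}$, where $W$ is the per-link rate. -/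
open Real

/-- Protocol-model converse for multihop delivery: if at least `c n` SD pairs have
distance at least `d_n = n^{-(1-(α-β))/2-ε'}`, each simultaneously active pair
exclusively occupies area at least `π r d_n` and these areas are disjoint within the
unit square (so `N π r d_n ≤ 1`), the sum rate satisfies `S ≤ W N`, the symmetric
throughput satisfies `T_n ≤ S/n`, and `r ≥ c₇ √(log n / n)`, then
`T_n ≤ (W/(π c₇)) n^{-(α-β)/2} n^{ε'} (log n)^{-1/2}`. -/
theorem multihop_converse_bound (n : ℕ) (hn : 2 ≤ n) (α β ε' c c₇ W r S Tn : ℝ)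
    (npairs N : ℕ)
    (hαβ₀ : 0 < α - β) (hαβ₁ : α - β ≤ 1) (hε' : 0 < ε') (hc : 0 < c)
    (hc₇ : 0 < c₇) (hW : 0 < W)
    (hpairs : c * (n : ℝ) ≤ (npairs : ℝ))
    (hN : (N : ℝ) * (Real.pi * r * (n : ℝ) ^ (-(1 - (α - β)) / 2 - ε')) ≤ 1)
    (hS : S ≤ W * N) (hT : Tn ≤ S / n)
    (hr : c₇ * Real.sqrt (Real.log n / n) ≤ r) :
    Tn ≤ W / (Real.pi * c₇) * (n : ℝ) ^ (-(α - β) / 2) * (n : ℝ) ^ ε' *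
      (Real.log n) ^ (-(1 / 2) : ℝ) := by
  have hn0 : (0:ℝ) < n := by positivity
  have hn1 : (1:ℝ) < n := by exact_mod_cast hn
  have hlog : 0 < Real.log n := Real.log_pos hn1
  set d : ℝ := (n : ℝ) ^ (-(1 - (α - β)) / 2 - ε') with hd_def
  have hd : 0 < d := Real.rpow_pos_of_pos hn0 _
  have hr0 : 0 < r := lt_of_lt_of_le (by positivity) hr
  have hπ : 0 < Real.pi := Real.pi_pos
  -- N ≤ 1 / (π r d)
  have hNle : (N : ℝ) ≤ 1 / (Real.pi * r * d) := by
    rw [le_div_iff₀ (by positivity)]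
    exact hN
  -- step 1 : Tn ≤ W / (π * (n * r * d))
  have key1 : Tn ≤ W / (Real.pi * ((n : ℝ) * r * d)) := by
    have h1 : Tn ≤ (W * N) / n := le_trans hT (by gcongr)
    have h2 : (W * (N:ℝ)) / n ≤ (W * (1 / (Real.pi * r * d))) / n := by gcongr
    calc Tn ≤ (W * (1 / (Real.pi * r * d))) / n := le_trans h1 h2
      _ = W / (Real.pi * ((n : ℝ) * r * d)) := by
          rw [mul_one_div, div_div]; congr 1; ring
  -- step 2 : lower bound the denominator
  have key2 : c₇ * Real.sqrt (Real.log n) * (n : ℝ) ^ ((α - β) / 2 - ε')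
      ≤ (n : ℝ) * r * d := by
    have hA : (n : ℝ) * d = (n : ℝ) ^ ((1:ℝ)/2) * (n : ℝ) ^ ((α - β) / 2 - ε') := by
      rw [hd_def, ← Real.rpow_add hn0]
      nth_rewrite 1 [show (n:ℝ) = (n:ℝ) ^ (1:ℝ) from (Real.rpow_one _).symm]
      rw [← Real.rpow_add hn0]
      congr 1; ring
    have hA0 : (n : ℝ) ^ ((1:ℝ)/2) ≠ 0 := by positivity
    have hnd : (n : ℝ) * (c₇ * Real.sqrt (Real.log n / n)) * d
        = c₇ * Real.sqrt (Real.log n) * (n : ℝ) ^ ((α - β) / 2 - ε') := by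
      rw [Real.sqrt_div hlog.le, Real.sqrt_eq_rpow (n:ℝ)]
      calc (n:ℝ) * (c₇ * (Real.sqrt (Real.log n) / (n:ℝ) ^ ((1:ℝ)/2))) * d
          = c₇ * Real.sqrt (Real.log n) * (((n:ℝ) * d) / (n:ℝ) ^ ((1:ℝ)/2)) := by ring
        _ = c₇ * Real.sqrt (Real.log n) * (n : ℝ) ^ ((α - β) / 2 - ε') := by
            rw [hA, mul_comm ((n:ℝ) ^ ((1:ℝ)/2)), mul_div_assoc, div_self hA0, mul_one]
    calc c₇ * Real.sqrt (Real.log n) * (n : ℝ) ^ ((α - β) / 2 - ε')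
        = (n : ℝ) * (c₇ * Real.sqrt (Real.log n / n)) * d := hnd.symm
      _ ≤ (n : ℝ) * r * d := by gcongr
  have key3 : Tn ≤ W / (Real.pi * (c₇ * Real.sqrt (Real.log n) *
      (n : ℝ) ^ ((α - β) / 2 - ε'))) := by
    refine le_trans key1 ?_
    gcongr
  -- step 3 : rewrite the RHS
  have hL : (Real.log n) ^ (-(1 / 2) : ℝ) = (Real.sqrt (Real.log n))⁻¹ := by
    rw [Real.rpow_neg hlog.le, ← Real.sqrt_eq_rpow]
  have hX : (n : ℝ) ^ (-(α - β) / 2) * (n : ℝ) ^ ε'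
      = ((n : ℝ) ^ ((α - β) / 2 - ε'))⁻¹ := by
    rw [← Real.rpow_add hn0, ← Real.rpow_neg hn0.le]
    congr 1; ring
  have hS0 : Real.sqrt (Real.log n) ≠ 0 := by positivity
  have hB0 : (n : ℝ) ^ ((α - β) / 2 - ε') ≠ 0 := by positivity
  refine le_trans key3 (le_of_eq ?_)
  rw [mul_assoc (W / (Real.pi * c₇)), hX, hL]
  field_simp
end
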